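/- Let T : C → C be a contraction with constant θ ∈ (0,1) on a nonempty closed convex subset C of a Banach space, with fixed point p. For the K iteration xₙ₊₁ = T(yₙ), yₙ = T((1-αₙ)Txₙ + αₙTzₙ), zₙ = (1-βₙ)xₙ + βₙTxₙ, one has ‖xₙ₊₁ - p‖ ≤ θ³(1 - αₙβₙ(1-θ))‖xₙ - p‖ for every n. -/
import Mathlib

private lemma combo_norm {X : Type*} [NormedAddCommGroup X] [NormedSpace ℝ X]
    (a b p : X) (t : ℝ) (ht0 : 0 ≤ t) (ht1 : t ≤ 1) :
    ‖(1 - t) • a + t • b - p‖ ≤ (1 - t) * ‖a - p‖ + t * ‖b - p‖ := by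
  have h : (1 - t) • a + t • b - p = (1 - t) • (a - p) + t • (b - p) := by module
  rw [h]
  calc ‖(1 - t) • (a - p) + t • (b - p)‖ ≤ ‖(1 - t) • (a - p)‖ + ‖t • (b - p)‖ :=
        norm_add_le _ _
    _ = (1 - t) * ‖a - p‖ + t * ‖b - p‖ := by
        rw [norm_smul, norm_smul, Real.norm_of_nonneg (by linarith), Real.norm_of_nonneg ht0]

theorem stmt_2 {X : Type*} [NormedAddCommGroup X] [NormedSpace ℝ X] [CompleteSpace X]
    (C : Set X) (hCne : C.Nonempty) (hCcl : IsClosed C) (hCcv : Convex ℝ C)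
    (T : X → X) (hTC : ∀ x ∈ C, T x ∈ C) (θ : ℝ) (hθ : θ ∈ Set.Ioo (0:ℝ) 1)
    (hT : ∀ x ∈ C, ∀ y ∈ C, ‖T x - T y‖ ≤ θ * ‖x - y‖)
    (p : X) (hpC : p ∈ C) (hp : T p = p)
    (α β : ℕ → ℝ) (hα : ∀ n, α n ∈ Set.Icc (0:ℝ) 1) (hβ : ∀ n, β n ∈ Set.Icc (0:ℝ) 1)
    (x z y : ℕ → X) (hx0 : x 0 ∈ C)
    (hz : ∀ n, z n = (1 - β n) • x n + β n • T (x n))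
    (hy : ∀ n, y n = T ((1 - α n) • T (x n) + α n • T (z n)))
    (hx : ∀ n, x (n + 1) = T (y n)) :
    ∀ n, ‖x (n + 1) - p‖ ≤ θ ^ 3 * (1 - α n * β n * (1 - θ)) * ‖x n - p‖ := by
  obtain ⟨hθ0, hθ1⟩ := hθ
  -- membership
  have hmemC : ∀ n, x n ∈ C := by
    intro n
    induction n with
    | zero => exact hx0
    | succ k ih =>
      have hzk : z k ∈ C := by
        rw [hz k]
        exact hCcv ih (hTC _ ih) (by linarith [(hβ k).1, (hβ k).2]) (hβ k).1 (by ring)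
      have hw : (1 - α k) • T (x k) + α k • T (z k) ∈ C :=
        hCcv (hTC _ ih) (hTC _ hzk) (by linarith [(hα k).1, (hα k).2]) (hα k).1 (by ring)
      rw [hx k]
      exact hTC _ (hy k ▸ hTC _ hw)
  intro n
  obtain ⟨hα0, hα1⟩ := hα n
  obtain ⟨hβ0, hβ1⟩ := hβ n
  have hxn := hmemC n
  have hzn : z n ∈ C := by
    rw [hz n]
    exact hCcv hxn (hTC _ hxn) (by linarith) hβ0 (by ring)
  have hw : (1 - α n) • T (x n) + α n • T (z n) ∈ C :=
    hCcv (hTC _ hxn) (hTC _ hzn) (by linarith) hα0 (by ring)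
  have hxnorm : 0 ≤ ‖x n - p‖ := norm_nonneg _
  -- step 1: z
  have hTz : ‖T (x n) - p‖ ≤ θ * ‖x n - p‖ := by
    have := hT _ hxn _ hpC; rwa [hp] at this
  have hzest : ‖z n - p‖ ≤ (1 - β n * (1 - θ)) * ‖x n - p‖ := by
    rw [hz n]
    calc ‖(1 - β n) • x n + β n • T (x n) - p‖
        ≤ (1 - β n) * ‖x n - p‖ + β n * ‖T (x n) - p‖ := combo_norm _ _ _ _ hβ0 hβ1
      _ ≤ (1 - β n) * ‖x n - p‖ + β n * (θ * ‖x n - p‖) := by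
          gcongr
      _ = (1 - β n * (1 - θ)) * ‖x n - p‖ := by ring
  have hTzp : ‖T (z n) - p‖ ≤ θ * ‖z n - p‖ := by
    have := hT _ hzn _ hpC; rwa [hp] at this
  have hwest : ‖(1 - α n) • T (x n) + α n • T (z n) - p‖
      ≤ θ * (1 - α n * β n * (1 - θ)) * ‖x n - p‖ := by
    calc ‖(1 - α n) • T (x n) + α n • T (z n) - p‖
        ≤ (1 - α n) * ‖T (x n) - p‖ + α n * ‖T (z n) - p‖ := combo_norm _ _ _ _ hα0 hα1
      _ ≤ (1 - α n) * (θ * ‖x n - p‖) + α n * (θ * ((1 - β n * (1 - θ)) * ‖x n - p‖)) :=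
          add_le_add (mul_le_mul_of_nonneg_left hTz (by linarith))
            (mul_le_mul_of_nonneg_left
              (hTzp.trans (mul_le_mul_of_nonneg_left hzest hθ0.le)) hα0)
      _ = θ * (1 - α n * β n * (1 - θ)) * ‖x n - p‖ := by ring
  have hyest : ‖y n - p‖ ≤ θ * (θ * (1 - α n * β n * (1 - θ)) * ‖x n - p‖) := by
    rw [hy n]
    calc ‖T ((1 - α n) • T (x n) + α n • T (z n)) - p‖
        ≤ θ * ‖(1 - α n) • T (x n) + α n • T (z n) - p‖ := by
          have := hT _ hw _ hpC; rwa [hp] at this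
      _ ≤ θ * (θ * (1 - α n * β n * (1 - θ)) * ‖x n - p‖) := by gcongr
  have hyn : y n ∈ C := by rw [hy n]; exact hTC _ hw
  calc ‖x (n + 1) - p‖ = ‖T (y n) - p‖ := by rw [hx n]
    _ ≤ θ * ‖y n - p‖ := by have := hT _ hyn _ hpC; rwa [hp] at this
    _ ≤ θ * (θ * (θ * (1 - α n * β n * (1 - θ)) * ‖x n - p‖)) := by gcongr
    _ = θ ^ 3 * (1 - α n * β n * (1 - θ)) * ‖x n - p‖ := by ring
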